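/- Let E, Q, J, R be real n×n matrices with EᵀQ = QᵀE, Q symmetric, Jᵀ = −J, and R = Rᵀ positive semidefinite, let B be a real n×m matrix and u : ℝ → ℝᵐ continuous, let ε ≥ 0, and set E_ε = E + εI and H_ε(ξ) = ½ ξᵀ Qᵀ E_ε ξ. Fix h ≥ 0 and x₀ ∈ ℝⁿ, and let z, v, w : ℝ → ℝⁿ be continuously differentiable functions realizing the exact Strang splitting steps: E_ε z'(t) = J Q z(t) with z(0) = x₀; E_ε v'(t) = −R Q v(t) + B u(t) with v(0) = z(h/2); and E_ε w'(t) = J Q w(t) with w(0) = v(h). With y_v(t) = Bᵀ Q v(t), the discrete dissipativity inequality holds for the exact split solution: H_ε(w(h/2)) − H_ε(x₀) ≤ ∫_0^h y_v(s)ᵀ u(s) ds. -/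

import Mathlib

open Matrix

private lemma quad_deriv {n : ℕ} (M : Matrix (Fin n) (Fin n) ℝ) (hM : Mᵀ = M)
    (x x' : ℝ → Fin n → ℝ) (hx : ∀ t, HasDerivAt x (x' t) t) (t : ℝ) :
    HasDerivAt (fun s => (1 / 2 : ℝ) * (x s ⬝ᵥ M.mulVec (x s)))
      (x t ⬝ᵥ M.mulVec (x' t)) t := by
  have hcomp : ∀ i, HasDerivAt (fun s => x s i) (x' t i) t :=
    fun i => hasDerivAt_pi.1 (hx t) i
  have hMx : ∀ i, HasDerivAt (fun s => M.mulVec (x s) i) (M.mulVec (x' t) i) t := by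
    intro i
    have := HasDerivAt.fun_sum (u := Finset.univ)
      (fun j _ => ((hcomp j).const_mul (M i j)))
    simpa [Matrix.mulVec, dotProduct] using this
  have hsum : HasDerivAt (fun s => x s ⬝ᵥ M.mulVec (x s))
      (x' t ⬝ᵥ M.mulVec (x t) + x t ⬝ᵥ M.mulVec (x' t)) t := by
    have := HasDerivAt.fun_sum (u := Finset.univ)
      (fun i _ => (hcomp i).mul (hMx i))
    simpa [dotProduct, Finset.sum_add_distrib] using this
  have hsym : x' t ⬝ᵥ M.mulVec (x t) = x t ⬝ᵥ M.mulVec (x' t) := by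
    rw [Matrix.dotProduct_mulVec, ← Matrix.mulVec_transpose, hM, dotProduct_comm]
  have := hsum.const_mul (1 / 2 : ℝ)
  rw [hsym] at this
  rw [show x t ⬝ᵥ M.mulVec (x' t) = (1 / 2 : ℝ) * (x t ⬝ᵥ M.mulVec (x' t) + x t ⬝ᵥ M.mulVec (x' t)) by ring]
  exact this

theorem phs_strang_splitting_discrete_dissipativity {n m : ℕ}
    (E Q J R : Matrix (Fin n) (Fin n) ℝ) (B : Matrix (Fin n) (Fin m) ℝ)
    (hEQ : Eᵀ * Q = Qᵀ * E) (hQsym : Qᵀ = Q) (hJ : Jᵀ = -J) (hRsym : Rᵀ = R)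
    (hRpsd : ∀ v : Fin n → ℝ, 0 ≤ v ⬝ᵥ R.mulVec v)
    (u : ℝ → Fin m → ℝ) (hu : Continuous u)
    (ε : ℝ) (hε : 0 ≤ ε)
    (Eε : Matrix (Fin n) (Fin n) ℝ) (hEε : Eε = E + ε • (1 : Matrix (Fin n) (Fin n) ℝ))
    (Hε : (Fin n → ℝ) → ℝ)
    (hHε : Hε = fun ξ => (1 / 2 : ℝ) * (ξ ⬝ᵥ (Qᵀ * Eε).mulVec ξ))
    (h : ℝ) (hh : 0 ≤ h) (x₀ : Fin n → ℝ)
    (z z' v v' w w' : ℝ → Fin n → ℝ)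
    (hz : ∀ t : ℝ, HasDerivAt z (z' t) t)
    (hzsys : ∀ t : ℝ, Eε.mulVec (z' t) = J.mulVec (Q.mulVec (z t)))
    (hz0 : z 0 = x₀)
    (hv : ∀ t : ℝ, HasDerivAt v (v' t) t) (hv' : Continuous v')
    (hvsys : ∀ t : ℝ, Eε.mulVec (v' t) = -(R.mulVec (Q.mulVec (v t))) + B.mulVec (u t))
    (hv0 : v 0 = z (h / 2))
    (hw : ∀ t : ℝ, HasDerivAt w (w' t) t)
    (hwsys : ∀ t : ℝ, Eε.mulVec (w' t) = J.mulVec (Q.mulVec (w t)))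
    (hw0 : w 0 = v h)
    (yv : ℝ → Fin m → ℝ)
    (hy : yv = fun t => Bᵀ.mulVec (Q.mulVec (v t))) :
    Hε (w (h / 2)) - Hε x₀ ≤ ∫ s in (0 : ℝ)..h, yv s ⬝ᵥ u s := by
  -- symmetry of M = Qᵀ Eε
  have hM : (Qᵀ * Eε)ᵀ = Qᵀ * Eε := by
    subst hEε
    rw [transpose_mul, transpose_transpose, transpose_add, transpose_smul,
      transpose_one, Matrix.add_mul, hEQ, Matrix.mul_add, Matrix.smul_mul,
      Matrix.mul_smul, Matrix.mul_one, Matrix.one_mul, hQsym]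
  -- derivative of Hε along a differentiable curve
  have key : ∀ (x x' : ℝ → Fin n → ℝ), (∀ t, HasDerivAt x (x' t) t) → ∀ t : ℝ,
      HasDerivAt (fun s => Hε (x s)) (Q.mulVec (x t) ⬝ᵥ Eε.mulVec (x' t)) t := by
    intro x x' hx t
    have hd := quad_deriv (Qᵀ * Eε) hM x x' hx t
    have : x t ⬝ᵥ (Qᵀ * Eε).mulVec (x' t) = Q.mulVec (x t) ⬝ᵥ Eε.mulVec (x' t) := by
      rw [← Matrix.mulVec_mulVec, Matrix.dotProduct_mulVec (A := Qᵀ),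
        Matrix.vecMul_transpose]
    rw [this] at hd
    simpa [hHε] using hd
  -- skew-symmetry gives zero dissipation on conservative steps
  have skew : ∀ q : Fin n → ℝ, q ⬝ᵥ J.mulVec q = 0 := by
    intro q
    have h1 : q ⬝ᵥ J.mulVec q = (-(J.mulVec q)) ⬝ᵥ q := by
      rw [Matrix.dotProduct_mulVec, ← Matrix.mulVec_transpose, hJ, Matrix.neg_mulVec]
    have h2 : (-(J.mulVec q)) ⬝ᵥ q = -(q ⬝ᵥ J.mulVec q) := by
      rw [neg_dotProduct, dotProduct_comm]
    linarith [h1, h2]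
  have const_of : ∀ (x x' : ℝ → Fin n → ℝ), (∀ t, HasDerivAt x (x' t) t) →
      (∀ t : ℝ, Eε.mulVec (x' t) = J.mulVec (Q.mulVec (x t))) →
      ∀ a b : ℝ, Hε (x a) = Hε (x b) := by
    intro x x' hx hsys a b
    have hzero : ∀ t : ℝ, HasDerivAt (fun s => Hε (x s)) 0 t := by
      intro t
      have := key x x' hx t
      rw [hsys t, skew (Q.mulVec (x t))] at this
      exact this
    exact is_const_of_deriv_eq_zero (fun t => (hzero t).differentiableAt)
      (fun t => (hzero t).deriv) a b
  have hvcont : Continuous v :=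
    continuous_iff_continuousAt.2 fun t => (hv t).continuousAt
  -- continuity of the power term and dissipation rate
  have hQvcont : Continuous fun s => Q.mulVec (v s) := by
    refine continuous_pi fun i => ?_
    simp only [Matrix.mulVec, dotProduct]
    exact continuous_finset_sum _ fun j _ =>
      continuous_const.mul ((continuous_apply j).comp hvcont)
  have hEεv'cont : Continuous fun s => Eε.mulVec (v' s) := by
    refine continuous_pi fun i => ?_
    simp only [Matrix.mulVec, dotProduct]
    exact continuous_finset_sum _ fun j _ =>
      continuous_const.mul ((continuous_apply j).comp hv')
  have hgcont : Continuous fun s => Q.mulVec (v s) ⬝ᵥ Eε.mulVec (v' s) := by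
    simp only [dotProduct]
    exact continuous_finset_sum _ fun i _ =>
      ((continuous_apply i).comp hQvcont).mul ((continuous_apply i).comp hEεv'cont)
  have hyucont : Continuous fun s => yv s ⬝ᵥ u s := by
    subst hy
    simp only [dotProduct, Matrix.mulVec]
    refine continuous_finset_sum _ fun i _ => Continuous.mul ?_ ((continuous_apply i).comp hu)
    exact continuous_finset_sum _ fun j _ =>
      continuous_const.mul ((continuous_apply j).comp hQvcont)
  -- energy balance on the dissipative step
  have hbal : Hε (v h) - Hε (v 0) =
      ∫ s in (0 : ℝ)..h, Q.mulVec (v s) ⬝ᵥ Eε.mulVec (v' s) := by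
    exact (intervalIntegral.integral_eq_sub_of_hasDerivAt
      (fun t _ => key v v' hv t) (hgcont.intervalIntegrable 0 h)).symm
  have hbound : ∀ s : ℝ, Q.mulVec (v s) ⬝ᵥ Eε.mulVec (v' s) ≤ yv s ⬝ᵥ u s := by
    intro s
    have heq : Q.mulVec (v s) ⬝ᵥ Eε.mulVec (v' s) =
        -(Q.mulVec (v s) ⬝ᵥ R.mulVec (Q.mulVec (v s))) + yv s ⬝ᵥ u s := by
      rw [hvsys s, dotProduct_add, dotProduct_neg, hy]
      congr 1
      rw [Matrix.dotProduct_mulVec (A := B), ← Matrix.mulVec_transpose]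
    rw [heq]
    linarith [hRpsd (Q.mulVec (v s))]
  have hint : (∫ s in (0 : ℝ)..h, Q.mulVec (v s) ⬝ᵥ Eε.mulVec (v' s)) ≤
      ∫ s in (0 : ℝ)..h, yv s ⬝ᵥ u s := by
    apply intervalIntegral.integral_mono_on hh (hgcont.intervalIntegrable 0 h)
      (hyucont.intervalIntegrable 0 h)
    exact fun s _ => hbound s
  have e1 : Hε (w (h / 2)) = Hε (v h) := by
    rw [← hw0]; exact const_of w w' hw hwsys (h / 2) 0
  have e2 : Hε (v 0) = Hε x₀ := by
    rw [hv0, ← hz0]; exact const_of z z' hz hzsys (h / 2) 0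
  rw [e1, ← e2]
  rw [hbal]
  exact hint
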